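/- Let V be a finite set, π strictly positive probability weights, x ≠ y ∈ V, and let Y ~ Binomial(m, p) with m = ξ(x)+ξ(y) and p = π(x)/(π(x)+π(y)) for a configuration ξ : V → ℕ with ∑_z ξ(z) = k. Define the random configuration Ξ by Ξ(x) = Y, Ξ(y) = m − Y, Ξ(z) = ξ(z) for z ∉ {x,y}. If ξ is distributed according to Multinomial(k, π), then Ξ is also distributed according to Multinomial(k, π). -/

import Mathlib

open Finset
open scoped Fin.NatCast

/-- Multinomial distribution with `k` trials and success probabilities `p`,
on configurations `ξ : V → ℕ` with total sum `k` (encoded via `Fin (k+1)`). -/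
noncomputable def multinomialPMF {V : Type*} [Fintype V] [DecidableEq V] (k : ℕ) (p : V → ℝ)
    (ξ : {ξ : V → Fin (k + 1) // ∑ x, (ξ x : ℕ) = k}) : ℝ :=
  (Nat.factorial k : ℝ) * ∏ x, p x ^ (ξ.1 x : ℕ) / (Nat.factorial (ξ.1 x) : ℝ)

/-- Transition kernel of the one-edge Binomial thermalization move at `{x,y}`:
the configuration is left unchanged off `{x, y}`, the total number
`m = ξ x + ξ y` of particles at `{x,y}` is conserved, and the new number of
particles at `x` is `Binomial(m, π x / (π x + π y))`-distributed. -/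
noncomputable def binKernel {V : Type*} [Fintype V] [DecidableEq V] (k : ℕ) (π : V → ℝ)
    (x y : V) (ξ ζ : {ξ : V → Fin (k + 1) // ∑ x, (ξ x : ℕ) = k}) : ℝ :=
  if (∀ z, z ≠ x → z ≠ y → ζ.1 z = ξ.1 z) ∧ ((ζ.1 x : ℕ) + (ζ.1 y : ℕ) = (ξ.1 x : ℕ) + (ξ.1 y : ℕ))
  then (Nat.choose ((ξ.1 x : ℕ) + (ξ.1 y : ℕ)) (ζ.1 x : ℕ) : ℝ) *
        (π x / (π x + π y)) ^ (ζ.1 x : ℕ) *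
        (1 - π x / (π x + π y)) ^ ((ξ.1 x : ℕ) + (ξ.1 y : ℕ) - (ζ.1 x : ℕ))
  else 0

lemma binKernel_sum {V : Type*} [Fintype V] [DecidableEq V] (k : ℕ) (π : V → ℝ)
    (x y : V) (hxy : x ≠ y)
    (ζ : {ξ : V → Fin (k + 1) // ∑ x, (ξ x : ℕ) = k}) :
    ∑ ξ : {ξ : V → Fin (k + 1) // ∑ x, (ξ x : ℕ) = k}, binKernel k π x y ζ ξ = 1 := by
  classical
  set p := π x / (π x + π y) with hp
  set m := (ζ.1 x : ℕ) + (ζ.1 y : ℕ) with hm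
  have hmk : m ≤ k := by
    calc m = ∑ z ∈ ({x, y} : Finset V), (ζ.1 z : ℕ) := by rw [Finset.sum_pair hxy]
    _ ≤ ∑ z, (ζ.1 z : ℕ) := Finset.sum_le_sum_of_subset (Finset.subset_univ _)
    _ = k := ζ.2
  set F : ℕ → V → Fin (k + 1) := fun j z =>
    if z = x then ((min j m : ℕ) : Fin (k + 1))
    else if z = y then ((m - min j m : ℕ) : Fin (k + 1)) else ζ.1 z
    with hF
  have hvx : ∀ j, ((F j x : Fin (k+1)) : ℕ) = min j m := by
    intro j
    simp only [hF, if_pos rfl]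
    exact Fin.val_cast_of_lt (Nat.lt_succ_of_le ((min_le_right j m).trans hmk))
  have hvy : ∀ j, ((F j y : Fin (k+1)) : ℕ) = m - min j m := by
    intro j
    simp only [hF, if_neg (Ne.symm hxy), if_pos rfl]
    exact Fin.val_cast_of_lt (Nat.lt_succ_of_le ((Nat.sub_le m _).trans hmk))
  have hFz : ∀ j, ∀ z, z ≠ x → z ≠ y → F j z = ζ.1 z := by
    intro j z hzx hzy; simp only [hF, if_neg hzx, if_neg hzy]
  have hS : ∀ j, ∑ z ∈ (univ.erase x).erase y, ((F j z : Fin (k+1)) : ℕ)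
      = ∑ z ∈ (univ.erase x).erase y, ((ζ.1 z : Fin (k+1)) : ℕ) := by
    intro j
    apply Finset.sum_congr rfl
    intro z hz
    simp only [mem_erase] at hz
    rw [hFz j z hz.2.1 hz.1]
  have key : ∀ g : V → ℕ, ∑ z, g z
      = g x + (g y + ∑ z ∈ (univ.erase x).erase y, g z) := by
    intro g
    rw [← Finset.add_sum_erase _ g (mem_univ x),
      ← Finset.add_sum_erase _ g (Finset.mem_erase.2 ⟨Ne.symm hxy, mem_univ y⟩),
      Finset.erase_right_comm]
  have h2 := ζ.2
  rw [key (fun z => ((ζ.1 z : Fin (k+1)) : ℕ))] at h2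
  have hFsum : ∀ j, ∑ z, ((F j z : Fin (k+1)) : ℕ) = k := by
    intro j
    rw [key, hS j, hvx j, hvy j]
    clear hS hvx hvy hFz key
    clear_value F
    clear hF F
    omega
  have hsum : ∑ ξ : {ξ : V → Fin (k + 1) // ∑ x, (ξ x : ℕ) = k}, binKernel k π x y ζ ξ
      = ∑ j ∈ Finset.range (m + 1), (m.choose j : ℝ) * p ^ j * (1 - p) ^ (m - j) := by
    simp only [binKernel]
    rw [Finset.sum_ite, Finset.sum_const_zero, add_zero]
    refine Finset.sum_nbij' (fun ξ => ((ξ.1 x : Fin (k+1)) : ℕ))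
      (fun j => ⟨F j, hFsum j⟩) ?_ ?_ ?_ ?_ ?_
    · intro ξ hξ
      simp only [Finset.mem_filter, Finset.mem_univ, true_and] at hξ
      beta_reduce
      rw [Finset.mem_range]
      omega
    · intro j hj
      have hj' := Nat.lt_succ_iff.1 (Finset.mem_range.1 hj)
      simp only [Finset.mem_filter, Finset.mem_univ, true_and]
      refine ⟨fun z hzx hzy => hFz j z hzx hzy, ?_⟩
      rw [hvx j, hvy j]
      omega
    · intro ξ hξ
      simp only [Finset.mem_filter, Finset.mem_univ, true_and] at hξ
      beta_reduce
      apply Subtype.ext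
      funext z
      show F ((ξ.1 x : Fin (k+1)) : ℕ) z = ξ.1 z
      by_cases hzx : z = x
      · subst hzx
        apply Fin.ext
        rw [hvx]
        omega
      · by_cases hzy : z = y
        · subst hzy
          apply Fin.ext
          rw [hvy]
          omega
        · rw [hFz _ z hzx hzy, hξ.1 z hzx hzy]
    · intro j hj
      have hj' := Nat.lt_succ_iff.1 (Finset.mem_range.1 hj)
      show ((F j x : Fin (k+1)) : ℕ) = j
      rw [hvx j]
      omega
    · intro ξ hξ
      simp only [Finset.mem_filter, Finset.mem_univ, true_and] at hξ
      beta_reduce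
      rw [← hm, ← hp]
  rw [hsum]
  have hbin : (∑ j ∈ Finset.range (m + 1), (m.choose j : ℝ) * p ^ j * (1 - p) ^ (m - j))
      = (p + (1 - p)) ^ m := by
    rw [add_pow]
    apply Finset.sum_congr rfl
    intro j _
    ring
  rw [hbin]
  norm_num

lemma detailed_balance {V : Type*} [Fintype V] [DecidableEq V] (k : ℕ) (π : V → ℝ)
    (hπpos : ∀ z, 0 < π z) (x y : V) (hxy : x ≠ y)
    (ξ ζ : {ξ : V → Fin (k + 1) // ∑ x, (ξ x : ℕ) = k}) :
    multinomialPMF k π ξ * binKernel k π x y ξ ζ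
      = multinomialPMF k π ζ * binKernel k π x y ζ ξ := by
  classical
  by_cases h : (∀ z, z ≠ x → z ≠ y → ζ.1 z = ξ.1 z) ∧
      ((ζ.1 x : ℕ) + (ζ.1 y : ℕ) = (ξ.1 x : ℕ) + (ξ.1 y : ℕ))
  · have h' : (∀ z, z ≠ x → z ≠ y → ξ.1 z = ζ.1 z) ∧
        ((ξ.1 x : ℕ) + (ξ.1 y : ℕ) = (ζ.1 x : ℕ) + (ζ.1 y : ℕ)) :=
      ⟨fun z hzx hzy => (h.1 z hzx hzy).symm, h.2.symm⟩
    rw [binKernel, if_pos h, binKernel, if_pos h']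
    set a := ((ξ.1 x : Fin (k+1)) : ℕ) with ha
    set b := ((ξ.1 y : Fin (k+1)) : ℕ) with hb
    set c := ((ζ.1 x : Fin (k+1)) : ℕ) with hc
    set d := ((ζ.1 y : Fin (k+1)) : ℕ) with hd
    have habcd : c + d = a + b := h.2
    -- split the products
    have key : ∀ g : V → ℝ, ∏ z, g z
        = g x * (g y * ∏ z ∈ (univ.erase x).erase y, g z) := by
      intro g
      rw [← Finset.mul_prod_erase _ g (mem_univ x),
        ← Finset.mul_prod_erase _ g (Finset.mem_erase.2 ⟨Ne.symm hxy, mem_univ y⟩),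
        Finset.erase_right_comm]
    have hQ : ∏ z ∈ (univ.erase x).erase y, (π z ^ ((ξ.1 z : Fin (k+1)) : ℕ) / ((ξ.1 z : Fin (k+1)) : ℕ).factorial)
        = ∏ z ∈ (univ.erase x).erase y, (π z ^ ((ζ.1 z : Fin (k+1)) : ℕ) / ((ζ.1 z : Fin (k+1)) : ℕ).factorial) := by
      apply Finset.prod_congr rfl
      intro z hz
      simp only [mem_erase] at hz
      rw [h.1 z hz.2.1 hz.1]
    rw [multinomialPMF, multinomialPMF, key, key
      (fun z => π z ^ ((ζ.1 z : Fin (k+1)) : ℕ) / ((ζ.1 z : Fin (k+1)) : ℕ).factorial), hQ]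
    set Q := ∏ z ∈ (univ.erase x).erase y,
      (π z ^ ((ζ.1 z : Fin (k+1)) : ℕ) / ((ζ.1 z : Fin (k+1)) : ℕ).factorial)
    -- now pure algebra
    have hs : 0 < π x + π y := by have := hπpos x; have := hπpos y; linarith
    have h1p : 1 - π x / (π x + π y) = π y / (π x + π y) := by field_simp; ring
    have hsub1 : a + b - c = d := by omega
    have hsub2 : c + d - a = b := by omega
    have hch1 : (((a + b)).choose c : ℝ) = (a+b).factorial / (c.factorial * d.factorial) := by
      rw [Nat.cast_choose ℝ (by omega : c ≤ a + b), hsub1]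
    have hch2 : (((c + d)).choose a : ℝ) = (a+b).factorial / (a.factorial * b.factorial) := by
      rw [Nat.cast_choose ℝ (by omega : a ≤ c + d), hsub2, habcd]
    have hps : ∀ u v : ℕ, u + v = a + b →
        (π x/(π x+π y))^u * (π y/(π x+π y))^v = π x^u * π y^v / (π x+π y)^(a+b) := by
      intro u v huv
      rw [div_pow, div_pow, div_mul_div_comm, ← pow_add, huv]
    have hB1 : ((a+b).factorial : ℝ)/(c.factorial*d.factorial) * (π x/(π x+π y))^c * (π y/(π x+π y))^d
        = ((a+b).factorial : ℝ)/(c.factorial*d.factorial) * (π x^c * π y^d / (π x+π y)^(a+b)) := by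
      rw [mul_assoc, hps c d habcd]
    have hB2 : ((a+b).factorial : ℝ)/(a.factorial*b.factorial) * (π x/(π x+π y))^a * (π y/(π x+π y))^b
        = ((a+b).factorial : ℝ)/(a.factorial*b.factorial) * (π x^a * π y^b / (π x+π y)^(a+b)) := by
      rw [mul_assoc, hps a b rfl]
    rw [h1p, hsub1, hsub2, hch1, hch2, hB1, hB2]
    have hfa : (a.factorial : ℝ) ≠ 0 := Nat.cast_ne_zero.2 a.factorial_ne_zero
    have hfb : (b.factorial : ℝ) ≠ 0 := Nat.cast_ne_zero.2 b.factorial_ne_zero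
    have hfc : (c.factorial : ℝ) ≠ 0 := Nat.cast_ne_zero.2 c.factorial_ne_zero
    have hfd : (d.factorial : ℝ) ≠ 0 := Nat.cast_ne_zero.2 d.factorial_ne_zero
    have hsne : ((π x + π y) ^ (a+b) : ℝ) ≠ 0 := pow_ne_zero _ (ne_of_gt hs)
    field_simp
    ring
  · have h' : ¬ ((∀ z, z ≠ x → z ≠ y → ξ.1 z = ζ.1 z) ∧
        ((ξ.1 x : ℕ) + (ξ.1 y : ℕ) = (ζ.1 x : ℕ) + (ζ.1 y : ℕ))) := by
      intro h'
      exact h ⟨fun z hzx hzy => (h'.1 z hzx hzy).symm, h'.2.symm⟩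
    rw [binKernel, if_neg h, binKernel, if_neg h', mul_zero, mul_zero]

/-- The Multinomial distribution is invariant under the Binomial
thermalization move of the Binomial Splitting process. -/
theorem multinomial_invariant_binomial_splitting {V : Type*} [Fintype V] [DecidableEq V]
    [Nonempty V] (k : ℕ) (π : V → ℝ)
    (hπpos : ∀ z, 0 < π z) (hπ1 : ∑ z, π z = 1)
    (x y : V) (hxy : x ≠ y)
    (ζ : {ξ : V → Fin (k + 1) // ∑ x, (ξ x : ℕ) = k}) :
    ∑ ξ : {ξ : V → Fin (k + 1) // ∑ x, (ξ x : ℕ) = k},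
        multinomialPMF k π ξ * binKernel k π x y ξ ζ = multinomialPMF k π ζ := by
  calc ∑ ξ : {ξ : V → Fin (k + 1) // ∑ x, (ξ x : ℕ) = k},
        multinomialPMF k π ξ * binKernel k π x y ξ ζ
      = ∑ ξ : {ξ : V → Fin (k + 1) // ∑ x, (ξ x : ℕ) = k},
        multinomialPMF k π ζ * binKernel k π x y ζ ξ :=
        Finset.sum_congr rfl fun ξ _ => detailed_balance k π hπpos x y hxy ξ ζ
    _ = multinomialPMF k π ζ * ∑ ξ : {ξ : V → Fin (k + 1) // ∑ x, (ξ x : ℕ) = k},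
        binKernel k π x y ζ ξ := by rw [Finset.mul_sum]
    _ = multinomialPMF k π ζ := by rw [binKernel_sum k π x y hxy ζ, mul_one]
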